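/- Let ξ̃ ≠ 0, μ̃ ∈ ℝ, σ̃ > 0, and let X be a random variable with the GEV distribution G_{ξ̃}(·; μ̃, σ̃). Then the Shannon entropy of X is H(X) = log σ̃ + (ξ̃ + 1)γ + 1. -/

import Mathlib

open MeasureTheory Filter Real Set

/-- The Shannon entropy `H(f) = -∫_{{f > 0}} f x * log (f x) dx` of a density `f`
with respect to Lebesgue measure. -/
noncomputable def shannonEntropy (f : ℝ → ℝ) : ℝ :=
  -∫ x in {x : ℝ | 0 < f x}, f x * Real.log (f x)

/-- Density of the (power) GEV family with sign `s` (`s = 1` gives the log-GEV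
density `l_{1,ξ}` on positive support, `s = -1` the negative log-GEV density
`l_{2,ξ}` on negative support):
`l(x) = (1/(σ|x|)) (1 + s ξ (log|x| - μ)/σ)_+^{-1-1/ξ} exp(-(1 + s ξ (log|x| - μ)/σ)_+^{-1/ξ})`. -/
noncomputable def pgevPdf (s ξ μ σ x : ℝ) : ℝ :=
  if 0 < s * x ∧ 0 < 1 + s * ξ * ((Real.log |x| - μ) / σ) then
    (1 / (σ * |x|)) * (1 + s * ξ * ((Real.log |x| - μ) / σ)) ^ (-1 - 1 / ξ) *
      Real.exp (-(1 + s * ξ * ((Real.log |x| - μ) / σ)) ^ (-1 / ξ))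
  else 0

/-- Density of the GEV distribution `G_ξ(·; μ, σ)`:
`g(x) = (1/σ) (1 + ξ (x - μ)/σ)_+^{-1-1/ξ} exp(-(1 + ξ (x - μ)/σ)_+^{-1/ξ})`. -/
noncomputable def gevPdf (ξ μ σ x : ℝ) : ℝ :=
  if 0 < 1 + (ξ / σ) * (x - μ) then
    (1 / σ) * (1 + (ξ / σ) * (x - μ)) ^ (-1 - 1 / ξ) *
      Real.exp (-(1 + (ξ / σ) * (x - μ)) ^ (-1 / ξ))
  else 0

lemma aux_mellinConv :
    MellinConvergent (fun t => Real.log t • ((Real.exp (-t) : ℝ) : ℂ)) 1 := by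
  refine (mellin_hasDerivAt_of_isBigO_rpow (E := ℂ) (a := 2) (b := 0) ?_ ?_ (by norm_num) ?_
      (by norm_num)).1
  · refine (Continuous.continuousOn ?_).locallyIntegrableOn measurableSet_Ioi
    exact Complex.continuous_ofReal.comp (Real.continuous_exp.comp continuous_neg)
  · rw [← Asymptotics.isBigO_norm_left]
    simp_rw [Complex.norm_real,
      Asymptotics.isBigO_norm_left]
    simpa only [neg_one_mul] using (isLittleO_exp_neg_mul_rpow_atTop zero_lt_one _).isBigO
  · simp_rw [neg_zero, Real.rpow_zero]
    refine Asymptotics.isBigO_const_of_tendsto (?_ : Tendsto _ _ (nhds (1 : ℂ))) one_ne_zero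
    rw [(by simp : (1 : ℂ) = Real.exp (-0))]
    exact (Complex.continuous_ofReal.comp
      (Real.continuous_exp.comp continuous_neg)).continuousWithinAt

lemma aux_integrableOn_log_mul_exp :
    IntegrableOn (fun t => Real.log t * Real.exp (-t)) (Ioi 0) := by
  have h := aux_mellinConv
  unfold MellinConvergent at h
  simp only [sub_self, Complex.cpow_zero, one_smul] at h
  have h2 : IntegrableOn (fun t : ℝ => ((Real.log t * Real.exp (-t) : ℝ) : ℂ)) (Ioi 0) := by
    refine h.congr_fun (fun t _ => ?_) measurableSet_Ioi
    beta_reduce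
    rw [Complex.real_smul, Complex.ofReal_mul]
  exact IntegrableOn.congr_fun h2.re (fun t _ => RCLike.ofReal_re _) measurableSet_Ioi

lemma aux_integral_log_mul_exp :
    ∫ t in Ioi 0, Real.log t * Real.exp (-t) = -Real.eulerMascheroniConstant := by
  set c := ∫ t in Ioi 0, Real.log t * Real.exp (-t) with hc
  have h1 := Complex.hasDerivAt_GammaIntegral (s := 1) (by norm_num)
  have hI : (∫ t : ℝ in Ioi 0, (t : ℂ) ^ ((1 : ℂ) - 1) * (Real.log t * Real.exp (-t))) =
      (c : ℂ) := by
    rw [show ((c : ℝ) : ℂ) = ∫ t in Ioi 0, ((Real.log t * Real.exp (-t) : ℝ) : ℂ) from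
      integral_ofReal.symm]
    refine setIntegral_congr_fun measurableSet_Ioi (fun t _ => ?_)
    rw [sub_self, Complex.cpow_zero, one_mul, Complex.ofReal_mul]
  rw [hI] at h1
  have h2 : HasDerivAt (fun x : ℝ => (Complex.GammaIntegral x).re) c 1 := by
    simpa using h1.real_of_complex
  have h3 : HasDerivAt Real.Gamma c 1 := by
    refine h2.congr_of_eventuallyEq ?_
    filter_upwards [isOpen_Ioi.eventually_mem (show (1:ℝ) ∈ Ioi 0 by norm_num)] with x hx
    rw [← Complex.Gamma_eq_integral (by simpa using (hx : (0:ℝ) < x)), Complex.Gamma_ofReal,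
      Complex.ofReal_re]
  have := h3.unique Real.hasDerivAt_Gamma_one
  linarith [this]

lemma aux_integrableOn_mul_exp :
    IntegrableOn (fun t : ℝ => t * Real.exp (-t)) (Ioi 0) := by
  have h := Real.GammaIntegral_convergent (by norm_num : (0:ℝ) < 2)
  refine h.congr_fun (fun t _ => ?_) measurableSet_Ioi
  norm_num [Real.rpow_one, mul_comm]

lemma aux_integral_mul_exp : ∫ t in Ioi 0, t * Real.exp (-t) = 1 := by
  have h := Real.Gamma_eq_integral (by norm_num : (0:ℝ) < 2)
  rw [Real.Gamma_two] at h
  rw [show (∫ t in Ioi 0, t * Real.exp (-t)) =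
      ∫ x in Ioi 0, Real.exp (-x) * x ^ ((2:ℝ) - 1) from
    setIntegral_congr_fun measurableSet_Ioi (fun t _ => by norm_num [Real.rpow_one, mul_comm])]
  exact h.symm

/-- For `ξ̃ ≠ 0`, `σ̃ > 0`, if `X` is a random variable with the GEV
distribution `G_{ξ̃}(·; μ̃, σ̃)` (density `gevPdf ξ̃ μ̃ σ̃`), then the Shannon entropy of
`X` is `H(X) = log σ̃ + (ξ̃ + 1)γ + 1`. -/
theorem stmt_19 {Ω : Type*} [MeasurableSpace Ω] (P : Measure Ω) [IsProbabilityMeasure P]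
    (ξ μ σ : ℝ) (hξ : ξ ≠ 0) (hσ : 0 < σ)
    (X : Ω → ℝ) (hXm : Measurable X)
    (hX : Measure.map X P = MeasureTheory.Measure.withDensity volume
      (fun x => ENNReal.ofReal (gevPdf ξ μ σ x))) :
    shannonEntropy (gevPdf ξ μ σ) =
      Real.log σ + (ξ + 1) * Real.eulerMascheroniConstant + 1 := by
  have hσ' : σ ≠ 0 := hσ.ne'
  set g : ℝ → ℝ := gevPdf ξ μ σ with hg
  set S : Set ℝ := {x : ℝ | 0 < 1 + (ξ / σ) * (x - μ)} with hS
  have hset : {x : ℝ | 0 < g x} = S := by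
    ext x
    simp only [mem_setOf_eq, hg, gevPdf, hS]
    constructor
    · intro hx
      by_contra h
      rw [if_neg h] at hx
      exact lt_irrefl 0 hx
    · intro hx
      rw [if_pos hx]
      positivity
  set φ : ℝ → ℝ := fun t => μ + (σ / ξ) * (t ^ (-ξ) - 1) with hφ
  have hu : ∀ t ∈ Ioi (0:ℝ), 1 + (ξ / σ) * (φ t - μ) = t ^ (-ξ) := by
    intro t _
    simp only [hφ]
    field_simp
    ring
  have himg : φ '' Ioi 0 = S := by
    ext x
    constructor
    · rintro ⟨t, ht, rfl⟩
      have h1 := hu t ht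
      simp only [hS, mem_setOf_eq, h1]
      exact Real.rpow_pos_of_pos ht _
    · intro hx
      have hx' : 0 < 1 + (ξ / σ) * (x - μ) := hx
      refine ⟨(1 + (ξ / σ) * (x - μ)) ^ (-1/ξ), Real.rpow_pos_of_pos hx' _, ?_⟩
      simp only [hφ]
      rw [← Real.rpow_mul hx'.le]
      rw [(by field_simp : (-1/ξ) * (-ξ) = 1), Real.rpow_one]
      field_simp
      ring
  have hinj : InjOn φ (Ioi 0) := by
    intro t1 h1 t2 h2 heq
    have h1' : (0:ℝ) < t1 := h1
    have h2' : (0:ℝ) < t2 := h2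
    have e1 : t1 ^ (-ξ) = t2 ^ (-ξ) := by
      have hne : σ / ξ ≠ 0 := div_ne_zero hσ' hξ
      simp only [hφ] at heq
      have := mul_left_cancel₀ hne
        (by linarith : (σ/ξ) * (t1 ^ (-ξ) - 1) = (σ/ξ) * (t2 ^ (-ξ) - 1))
      linarith
    have e2 : (t1 ^ (-ξ)) ^ (-1/ξ) = (t2 ^ (-ξ)) ^ (-1/ξ) := by rw [e1]
    rwa [← Real.rpow_mul h1'.le, ← Real.rpow_mul h2'.le,
      (by field_simp : (-ξ) * (-1/ξ) = 1), Real.rpow_one, Real.rpow_one] at e2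
  have hderiv : ∀ t ∈ Ioi (0:ℝ), HasDerivWithinAt φ (-σ * t ^ (-ξ - 1)) (Ioi 0) t := by
    intro t ht
    have ht' : (0:ℝ) < t := ht
    have h1 : HasDerivAt (fun x : ℝ => x ^ (-ξ)) (-ξ * t ^ (-ξ - 1)) t :=
      Real.hasDerivAt_rpow_const (Or.inl ht'.ne')
    have h2 : HasDerivAt φ ((σ / ξ) * (-ξ * t ^ (-ξ - 1))) t := by
      simpa [hφ] using ((h1.sub_const 1).const_mul (σ / ξ)).const_add μ
    have h3 : (σ / ξ) * (-ξ * t ^ (-ξ - 1)) = -σ * t ^ (-ξ - 1) := by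
      field_simp
    rw [h3] at h2
    exact h2.hasDerivWithinAt
  have hval : ∀ t ∈ Ioi (0:ℝ), g (φ t) = (1/σ) * t ^ (ξ + 1) * Real.exp (-t) := by
    intro t ht
    have ht' : (0:ℝ) < t := ht
    have hut := hu t ht
    have hpos : 0 < 1 + (ξ / σ) * (φ t - μ) := hut ▸ Real.rpow_pos_of_pos ht' _
    simp only [hg, gevPdf, if_pos hpos, hut]
    rw [← Real.rpow_mul ht'.le, ← Real.rpow_mul ht'.le,
      (by field_simp; ring : (-ξ) * (-1 - 1/ξ) = ξ + 1),
      (by field_simp : (-ξ) * (-1/ξ) = 1), Real.rpow_one]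
    exact if_pos (Real.rpow_pos_of_pos ht' _)
  have hlogval : ∀ t ∈ Ioi (0:ℝ),
      Real.log (g (φ t)) = -Real.log σ + (ξ+1) * Real.log t - t := by
    intro t ht
    have ht' : (0:ℝ) < t := ht
    rw [hval t ht]
    rw [Real.log_mul (by positivity) (Real.exp_ne_zero _),
      Real.log_mul (by positivity) (by positivity), Real.log_exp,
      Real.log_rpow ht', one_div, Real.log_inv]
    ring
  have hmain : ∫ x in S, g x * Real.log (g x) =
      ∫ t in Ioi 0, Real.exp (-t) * (-Real.log σ + (ξ+1) * Real.log t - t) := by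
    rw [← himg,
      integral_image_eq_integral_abs_deriv_smul measurableSet_Ioi hderiv hinj]
    refine setIntegral_congr_fun measurableSet_Ioi (fun t ht => ?_)
    have ht' : (0:ℝ) < t := ht
    rw [smul_eq_mul, hlogval t ht, hval t ht]
    have habs : |(-σ * t ^ (-ξ-1))| = σ * t ^ (-ξ-1) := by
      rw [abs_mul, abs_neg, abs_of_pos hσ, abs_of_pos (Real.rpow_pos_of_pos ht' _)]
    rw [habs]
    have hprod : σ * t ^ (-ξ-1) * ((1/σ) * t ^ (ξ+1) * Real.exp (-t)) = Real.exp (-t) := by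
      rw [show σ * t ^ (-ξ-1) * ((1/σ) * t ^ (ξ+1) * Real.exp (-t)) =
        (t ^ (-ξ-1) * t ^ (ξ+1)) * Real.exp (-t) * (σ * (1/σ)) from by ring,
        ← Real.rpow_add ht', show -ξ - 1 + (ξ + 1) = 0 by ring, Real.rpow_zero]
      field_simp
    rw [show σ * t ^ (-ξ-1) *
        ((1/σ) * t ^ (ξ+1) * Real.exp (-t) * (-Real.log σ + (ξ+1) * Real.log t - t)) =
        (σ * t ^ (-ξ-1) * ((1/σ) * t ^ (ξ+1) * Real.exp (-t))) *
          (-Real.log σ + (ξ+1) * Real.log t - t) from by ring, hprod]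
  have hI1 : IntegrableOn (fun t : ℝ => Real.exp (-t)) (Ioi 0) := by
    simpa using exp_neg_integrableOn_Ioi 0 one_pos
  have heval : ∫ t in Ioi 0, Real.exp (-t) * (-Real.log σ + (ξ+1) * Real.log t - t) =
      -(Real.log σ + (ξ + 1) * Real.eulerMascheroniConstant + 1) := by
    rw [show (fun t : ℝ => Real.exp (-t) * (-Real.log σ + (ξ+1) * Real.log t - t)) =
      fun t => (-Real.log σ) * Real.exp (-t) +
        ((ξ+1) * (Real.log t * Real.exp (-t)) + (-1:ℝ) * (t * Real.exp (-t))) from by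
        funext t; ring]
    have hInt1 : IntegrableOn (fun t : ℝ => (-Real.log σ) * Real.exp (-t)) (Ioi 0) :=
      hI1.const_mul _
    have hInt2 : IntegrableOn (fun t : ℝ => (ξ+1) * (Real.log t * Real.exp (-t))) (Ioi 0) :=
      aux_integrableOn_log_mul_exp.const_mul _
    have hInt3 : IntegrableOn (fun t : ℝ => (-1:ℝ) * (t * Real.exp (-t))) (Ioi 0) :=
      aux_integrableOn_mul_exp.const_mul _
    have hInt23 : IntegrableOn (fun t : ℝ => (ξ+1) * (Real.log t * Real.exp (-t)) +
        (-1:ℝ) * (t * Real.exp (-t))) (Ioi 0) := hInt2.add hInt3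
    rw [integral_add hInt1 hInt23, integral_add hInt2 hInt3,
      integral_const_mul, integral_const_mul, integral_const_mul,
      integral_exp_neg_Ioi_zero, aux_integral_log_mul_exp, aux_integral_mul_exp]
    ring
  unfold shannonEntropy
  rw [hset, hmain, heval, neg_neg]
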